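/- If a solution (ξ, θ, α) of (*) with values in 𝒟 satisfies, for some t₀ ∈ ℝ, either θ(t₀) < θ* and θ'(t₀) > 0, or θ(t₀) > θ* and θ'(t₀) < 0, then there exists a finite time T ∈ (0, ∞) such that θ(t₀ + T) = θ*. -/

import Mathlib

/-- The constant `m = m₁ + m₂ + 2/g`. -/
noncomputable def mconst (g m₁ m₂ : ℕ) : ℝ := (m₁ : ℝ) + (m₂ : ℝ) + 2 / (g : ℝ)

/-- The angle `θ* = arctan √(m₁/m₂)`. -/
noncomputable def thetaStar (m₁ m₂ : ℕ) : ℝ :=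
  Real.arctan (Real.sqrt ((m₁ : ℝ) / (m₂ : ℝ)))

/-- `l(θ) = m₁ cos² θ - m₂ sin² θ`. -/
noncomputable def lfun (m₁ m₂ : ℕ) (θ : ℝ) : ℝ :=
  (m₁ : ℝ) * Real.cos θ ^ 2 - (m₂ : ℝ) * Real.sin θ ^ 2

/-- `(ξ, θ, α)` is a (globally defined) solution of the ODE system (*):
`ξ' = cos α · sin 2θ`, `θ' = sin α · sin 2θ`,
`α' = sin α · sin 2θ · (exp((4/g)ξ) - m) + 2 cos α · l(θ)`. -/
def IsSolution (g m₁ m₂ : ℕ) (ξ θ α : ℝ → ℝ) : Prop :=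
  ∀ t : ℝ,
    HasDerivAt ξ (Real.cos (α t) * Real.sin (2 * θ t)) t ∧
    HasDerivAt θ (Real.sin (α t) * Real.sin (2 * θ t)) t ∧
    HasDerivAt α
      (Real.sin (α t) * Real.sin (2 * θ t) *
          (Real.exp (4 / (g : ℝ) * ξ t) - mconst g m₁ m₂) +
        2 * Real.cos (α t) * lfun m₁ m₂ (θ t)) t

open Real Set Filter intervalIntegral

lemma sin_min_le {a b x : ℝ} (ha : 0 ≤ a) (hb : b ≤ π) (h1 : a ≤ x) (h2 : x ≤ b) :
    min (Real.sin a) (Real.sin b) ≤ Real.sin x := by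
  have hpi := Real.pi_pos
  rcases le_or_gt x (π/2) with hx | hx
  · refine le_trans (min_le_left _ _) ?_
    have := Real.strictMonoOn_sin.monotoneOn (a := a) (b := x)
      ⟨by linarith, by linarith⟩ ⟨by linarith, by linarith⟩ h1
    exact this
  · refine le_trans (min_le_right _ _) ?_
    have hsx : Real.sin x = Real.sin (π - x) := (Real.sin_pi_sub x).symm
    have hsb : Real.sin b = Real.sin (π - b) := (Real.sin_pi_sub b).symm
    rw [hsx, hsb]
    exact Real.strictMonoOn_sin.monotoneOn (a := π - b) (b := π - x)
      ⟨by linarith, by linarith⟩ ⟨by linarith, by linarith⟩ (by linarith)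

lemma thetaStar_mem {m₁ m₂ : ℕ} (hm₁ : 0 < m₁) (hm₂ : 0 < m₂) :
    thetaStar m₁ m₂ ∈ Set.Ioo 0 (π/2) := by
  constructor
  · have : Real.arctan 0 < Real.arctan (Real.sqrt ((m₁:ℝ)/m₂)) :=
      Real.arctan_strictMono (by positivity)
    rwa [Real.arctan_zero] at this
  · exact Real.arctan_lt_pi_div_two _

lemma tan_thetaStar (m₁ m₂ : ℕ) :
    Real.tan (thetaStar m₁ m₂) = Real.sqrt ((m₁ : ℝ) / (m₂ : ℝ)) := Real.tan_arctan _

lemma lfun_nonneg {m₁ m₂ : ℕ} (hm₁ : 0 < m₁) (hm₂ : 0 < m₂) {x : ℝ}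
    (h0 : 0 ≤ x) (hx : x ≤ thetaStar m₁ m₂) : 0 ≤ lfun m₁ m₂ x := by
  have hts := thetaStar_mem hm₁ hm₂
  have hpi := Real.pi_pos
  have hcos : 0 < Real.cos x := Real.cos_pos_of_mem_Ioo ⟨by linarith [hts.2], by linarith [hts.2]⟩
  have htan : Real.tan x ≤ Real.sqrt ((m₁ : ℝ) / (m₂ : ℝ)) := by
    rcases eq_or_lt_of_le hx with h | h
    · rw [h, tan_thetaStar]
    · have := Real.strictMonoOn_tan (a := x) (b := thetaStar m₁ m₂)
        ⟨by linarith [hts.2], by linarith [hts.2]⟩ ⟨by linarith [hts.1], hts.2⟩ h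
      rw [tan_thetaStar] at this
      exact this.le
  have htan0 : 0 ≤ Real.tan x := by
    rw [Real.tan_eq_sin_div_cos]
    apply div_nonneg _ hcos.le
    exact Real.sin_nonneg_of_nonneg_of_le_pi h0 (by linarith [hts.2])
  have hmm : Real.sqrt ((m₁:ℝ)/(m₂:ℝ)) ^ 2 = (m₁:ℝ)/(m₂:ℝ) := Real.sq_sqrt (by positivity)
  have htan2 : Real.tan x ^ 2 ≤ (m₁ : ℝ) / (m₂ : ℝ) := by
    nlinarith [Real.sqrt_nonneg ((m₁:ℝ)/(m₂:ℝ))]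
  have hsin : Real.sin x = Real.tan x * Real.cos x := by
    rw [Real.tan_eq_sin_div_cos]; field_simp
  have hm₂' : (0:ℝ) < m₂ := by exact_mod_cast hm₂
  have key : (m₂:ℝ) * Real.sin x ^ 2 ≤ m₁ * Real.cos x ^ 2 := by
    rw [hsin]
    have h1 : (m₂:ℝ) * (Real.tan x * Real.cos x)^2 = ((m₂:ℝ) * Real.tan x^2) * Real.cos x^2 := by
      ring
    rw [h1]
    have h2 : (m₂:ℝ) * Real.tan x^2 ≤ m₁ := by
      have := mul_le_mul_of_nonneg_left htan2 hm₂'.le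
      rw [mul_div_cancel₀ _ hm₂'.ne'] at this
      linarith
    nlinarith [pow_pos hcos 2, sq_nonneg (Real.cos x)]
  unfold lfun; linarith

lemma lfun_pos {m₁ m₂ : ℕ} (hm₁ : 0 < m₁) (hm₂ : 0 < m₂) {x : ℝ}
    (h0 : 0 < x) (hx : x < thetaStar m₁ m₂) : 0 < lfun m₁ m₂ x := by
  have hts := thetaStar_mem hm₁ hm₂
  have hpi := Real.pi_pos
  have hcos : 0 < Real.cos x := Real.cos_pos_of_mem_Ioo ⟨by linarith [hts.2], by linarith [hts.2]⟩
  have htan : Real.tan x < Real.sqrt ((m₁ : ℝ) / (m₂ : ℝ)) := by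
    have := Real.strictMonoOn_tan (a := x) (b := thetaStar m₁ m₂)
      ⟨by linarith [hts.2], by linarith [hts.2]⟩ ⟨by linarith [hts.1], hts.2⟩ hx
    rwa [tan_thetaStar] at this
  have htan0 : 0 ≤ Real.tan x := by
    rw [Real.tan_eq_sin_div_cos]
    apply div_nonneg _ hcos.le
    exact Real.sin_nonneg_of_nonneg_of_le_pi h0.le (by linarith [hts.2])
  have hmm : Real.sqrt ((m₁:ℝ)/(m₂:ℝ)) ^ 2 = (m₁:ℝ)/(m₂:ℝ) := Real.sq_sqrt (by positivity)
  have htan2 : Real.tan x ^ 2 < (m₁ : ℝ) / (m₂ : ℝ) := by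
    nlinarith [Real.sqrt_nonneg ((m₁:ℝ)/(m₂:ℝ))]
  have hsin : Real.sin x = Real.tan x * Real.cos x := by
    rw [Real.tan_eq_sin_div_cos]; field_simp
  have hm₂' : (0:ℝ) < m₂ := by exact_mod_cast hm₂
  have key : (m₂:ℝ) * Real.sin x ^ 2 < m₁ * Real.cos x ^ 2 := by
    rw [hsin]
    have h1 : (m₂:ℝ) * (Real.tan x * Real.cos x)^2 = ((m₂:ℝ) * Real.tan x^2) * Real.cos x^2 := by
      ring
    rw [h1]
    have h2 : (m₂:ℝ) * Real.tan x^2 < m₁ := by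
      have := (mul_lt_mul_of_pos_left htan2 hm₂')
      rw [mul_div_cancel₀ _ hm₂'.ne'] at this
      linarith
    nlinarith [pow_pos hcos 2, sq_nonneg (Real.cos x)]
  unfold lfun; linarith

lemma lfun_le {m₁ m₂ : ℕ} (x : ℝ) : lfun m₁ m₂ x ≤ m₁ := by
  unfold lfun
  nlinarith [Real.sin_sq_add_cos_sq x, sq_nonneg (Real.sin x), Real.cos_sq_le_one x,
    Nat.cast_nonneg (α := ℝ) m₂, sq_nonneg (Real.cos x)]

set_option maxHeartbeats 1000000 in
theorem case1 (g m₁ m₂ : ℕ) (hg : 0 < g) (hm₁ : 0 < m₁) (hm₂ : 0 < m₂)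
    (ξ θ α : ℝ → ℝ) (hsol : IsSolution g m₁ m₂ ξ θ α)
    (hD : ∀ t : ℝ, θ t ∈ Set.Ioo 0 (Real.pi / 2)) (t₀ : ℝ)
    (h1 : θ t₀ < thetaStar m₁ m₂)
    (h2 : 0 < Real.sin (α t₀) * Real.sin (2 * θ t₀)) :
    ∃ T > (0 : ℝ), θ (t₀ + T) = thetaStar m₁ m₂ := by
  by_contra hTcon
  push_neg at hTcon
  have hpi := Real.pi_pos
  have hts := thetaStar_mem hm₁ hm₂
  -- continuity of everything
  have hdξ : Differentiable ℝ ξ := fun t => ((hsol t).1).differentiableAt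
  have hdθ : Differentiable ℝ θ := fun t => ((hsol t).2.1).differentiableAt
  have hdα : Differentiable ℝ α := fun t => ((hsol t).2.2).differentiableAt
  have hcθ : Continuous θ := hdθ.continuous
  have hcα : Continuous α := hdα.continuous
  have hcξ : Continuous ξ := hdξ.continuous
  have hcs : Continuous (fun t => Real.sin (α t)) := Real.continuous_sin.comp hcα
  have hcc : Continuous (fun t => Real.cos (α t)) := Real.continuous_cos.comp hcα
  have hcS2 : Continuous (fun t => Real.sin (2 * θ t)) :=
    Real.continuous_sin.comp (continuous_const.mul hcθ)
  have hcE : Continuous (fun t => Real.exp (4 / (g:ℝ) * ξ t)) :=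
    Real.continuous_exp.comp (continuous_const.mul hcξ)
  have hcl : Continuous (fun t => lfun m₁ m₂ (θ t)) := by
    unfold lfun
    exact (continuous_const.mul ((Real.continuous_cos.comp hcθ).pow 2)).sub
      (continuous_const.mul ((Real.continuous_sin.comp hcθ).pow 2))
  -- positivity of sin 2θ
  have hS2pos : ∀ t : ℝ, 0 < Real.sin (2 * θ t) := by
    intro t
    apply Real.sin_pos_of_pos_of_lt_pi
    · linarith [(hD t).1]
    · linarith [(hD t).2]
  have hS2le : ∀ t : ℝ, Real.sin (2 * θ t) ≤ 1 := fun t => Real.sin_le_one _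
  have h2s : 0 < Real.sin (α t₀) := by
    rcases mul_pos_iff.1 h2 with ⟨hs, _⟩ | ⟨_, hneg⟩
    · exact hs
    · exact absurd (hS2pos t₀) (by linarith)
  -- θ stays below θ*
  have hθlt : ∀ t, t₀ ≤ t → θ t < thetaStar m₁ m₂ := by
    intro t ht
    by_contra hge
    push_neg at hge
    rcases eq_or_lt_of_le hge with heq | hlt
    · have htne : t₀ < t := by
        rcases eq_or_lt_of_le ht with h | h
        · exfalso; rw [← h] at heq; linarith
        · exact h
      exact hTcon (t - t₀) (by linarith) (by rw [show t₀ + (t - t₀) = t by ring, ← heq])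
    · have hIVT := intermediate_value_Icc ht hcθ.continuousOn
      have : thetaStar m₁ m₂ ∈ Set.Icc (θ t₀) (θ t) := ⟨h1.le, hlt.le⟩
      obtain ⟨x, hx, hθx⟩ := hIVT this
      have hxne : t₀ < x := by
        rcases eq_or_lt_of_le hx.1 with h | h
        · exfalso; rw [← h] at hθx; linarith
        · exact h
      exact hTcon (x - t₀) (by linarith) (by rw [show t₀ + (x - t₀) = x by ring]; exact hθx)
  -- sin (α t) stays positive
  have hspos : ∀ t, t₀ ≤ t → 0 < Real.sin (α t) := by
    by_contra hcon
    push_neg at hcon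
    obtain ⟨tbad, htbad, hsbad⟩ := hcon
    set A : Set ℝ := {t | t₀ ≤ t ∧ Real.sin (α t) ≤ 0} with hA
    have hA_closed : IsClosed A := by
      have : A = Set.Ici t₀ ∩ {t | Real.sin (α t) ≤ 0} := by
        ext x; simp [hA, Set.mem_Ici]
      rw [this]
      exact isClosed_Ici.inter (isClosed_le hcs continuous_const)
    have hAne : A.Nonempty := ⟨tbad, htbad, hsbad⟩
    have hAbdd : BddBelow A := ⟨t₀, fun x hx => hx.1⟩
    set t₁ := sInf A with ht₁def
    have ht₁A : t₁ ∈ A := hA_closed.csInf_mem hAne hAbdd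
    have ht₁ge : t₀ ≤ t₁ := ht₁A.1
    have ht₁gt : t₀ < t₁ := by
      rcases eq_or_lt_of_le ht₁ge with h | h
      · exfalso; rw [← h] at ht₁A; linarith [ht₁A.2]
      · exact h
    have hbefore : ∀ x, t₀ ≤ x → x < t₁ → 0 < Real.sin (α x) := by
      intro x hx hxlt
      by_contra hnx
      push_neg at hnx
      exact absurd (csInf_le hAbdd ⟨hx, hnx⟩) (not_le.2 hxlt)
    have hzero : Real.sin (α t₁) = 0 := by
      refine le_antisymm ht₁A.2 ?_
      have htd : Filter.Tendsto (fun x => Real.sin (α x)) (nhdsWithin t₁ (Set.Iio t₁))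
          (nhds (Real.sin (α t₁))) := (hcs.continuousAt).continuousWithinAt
      refine ge_of_tendsto htd ?_
      filter_upwards [Ioo_mem_nhdsLT_of_mem (⟨ht₁gt, le_rfl⟩ : t₁ ∈ Set.Ioc t₀ t₁)] with x hx
      exact (hbefore x hx.1.le hx.2).le
    have hlpos : 0 < lfun m₁ m₂ (θ t₁) := lfun_pos hm₁ hm₂ (hD t₁).1 (hθlt t₁ ht₁ge)
    have hderiv : HasDerivAt (fun x => Real.sin (α x)) (2 * lfun m₁ m₂ (θ t₁)) t₁ := by
      have hd := ((hsol t₁).2.2).sin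
      have hval : Real.cos (α t₁) *
          (Real.sin (α t₁) * Real.sin (2 * θ t₁) * (Real.exp (4 / (g:ℝ) * ξ t₁) - mconst g m₁ m₂)
            + 2 * Real.cos (α t₁) * lfun m₁ m₂ (θ t₁)) = 2 * lfun m₁ m₂ (θ t₁) := by
        have hcossq : Real.cos (α t₁) ^ 2 = 1 := by
          have := Real.sin_sq_add_cos_sq (α t₁)
          rw [hzero] at this; nlinarith
        rw [hzero]; nlinarith [hcossq]
      rw [← hval]
      exact hd
    have hslope := hasDerivAt_iff_tendsto_slope.1 hderiv
    have hev : ∀ᶠ x in nhdsWithin t₁ {t₁}ᶜ, 0 < slope (fun x => Real.sin (α x)) t₁ x :=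
      hslope.eventually (eventually_gt_nhds (by positivity))
    have hIoo : Set.Ioo t₀ t₁ ∈ nhdsWithin t₁ (Set.Iio t₁) :=
      Ioo_mem_nhdsLT_of_mem (⟨ht₁gt, le_rfl⟩ : t₁ ∈ Set.Ioc t₀ t₁)
    have hle : nhdsWithin t₁ (Set.Iio t₁) ≤ nhdsWithin t₁ {t₁}ᶜ :=
      nhdsWithin_mono t₁ (fun x hx => ne_of_lt hx)
    have hIoo' : ∀ᶠ x in nhdsWithin t₁ (Set.Iio t₁), x ∈ Set.Ioo t₀ t₁ :=
      Filter.eventually_of_mem hIoo (fun x hx => hx)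
    have hev' : ∀ᶠ x in nhdsWithin t₁ (Set.Iio t₁),
        0 < slope (fun x => Real.sin (α x)) t₁ x ∧ x ∈ Set.Ioo t₀ t₁ :=
      (hev.filter_mono hle).and hIoo'
    obtain ⟨x, hx1, hx2⟩ := hev'.exists
    have : slope (fun x => Real.sin (α x)) t₁ x < 0 := by
      rw [slope_def_field]
      apply div_neg_of_pos_of_neg
      · rw [hzero]; simpa using hbefore x hx2.1.le hx2.2
      · linarith [hx2.2]
    linarith
  -- θ is monotone on [t₀, ∞)
  have hθd : ∀ x, HasDerivAt θ (Real.sin (α x) * Real.sin (2 * θ x)) x := fun x => (hsol x).2.1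
  have hθmono : MonotoneOn θ (Set.Ici t₀) := by
    apply monotoneOn_of_deriv_nonneg (convex_Ici t₀) hcθ.continuousOn
      (fun x _ => (hdθ x).differentiableWithinAt)
    intro x hx
    rw [interior_Ici] at hx
    rw [(hθd x).deriv]
    exact mul_nonneg (hspos x (le_of_lt hx)).le (hS2pos x).le
  have hθge : ∀ t, t₀ ≤ t → θ t₀ ≤ θ t := fun t ht =>
    hθmono (Set.self_mem_Ici) (Set.mem_Ici.2 ht) ht
  -- lower bound cb for sin 2θ
  obtain ⟨cb, hcbdef⟩ : ∃ cb : ℝ, cb = min (Real.sin (2 * θ t₀)) (Real.sin (2 * thetaStar m₁ m₂)) :=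
    ⟨_, rfl⟩
  have hcb : 0 < cb := by
    rw [hcbdef]
    apply lt_min (hS2pos t₀)
    apply Real.sin_pos_of_pos_of_lt_pi
    · linarith [hts.1]
    · linarith [hts.2]
  have hS2b : ∀ t, t₀ ≤ t → cb ≤ Real.sin (2 * θ t) := by
    intro t ht
    rw [hcbdef]
    apply sin_min_le
    · linarith [(hD t₀).1]
    · linarith [hts.2]
    · linarith [hθge t ht]
    · linarith [hθlt t ht]
  -- constants
  have hgR : (0:ℝ) < (g:ℝ) := by exact_mod_cast hg
  have hm2 : 2 < mconst g m₁ m₂ := by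
    have h1 : (1:ℝ) ≤ (m₁:ℝ) := by exact_mod_cast hm₁
    have h2' : (1:ℝ) ≤ (m₂:ℝ) := by exact_mod_cast hm₂
    have : 0 < 2 / (g:ℝ) := by positivity
    unfold mconst; linarith
  have hm0 : 0 < mconst g m₁ m₂ := by linarith
  obtain ⟨K, hKdef⟩ : ∃ K : ℝ, K = mconst g m₁ m₂ + 2 * (m₁:ℝ) / cb := ⟨_, rfl⟩
  have hKpos : 0 < K := by
    have h0 : 0 ≤ 2 * (m₁:ℝ) / cb := by positivity
    rw [hKdef]; linarith
  -- derivative of cos (α t)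
  have hA' : ∀ x, HasDerivAt α (Real.sin (α x) * Real.sin (2 * θ x) *
      (Real.exp (4 / (g:ℝ) * ξ x) - mconst g m₁ m₂) +
      2 * Real.cos (α x) * lfun m₁ m₂ (θ x)) x := fun x => (hsol x).2.2
  have hCd : ∀ x, HasDerivAt (fun τ => Real.cos (α τ))
      (-Real.sin (α x) * (Real.sin (α x) * Real.sin (2 * θ x) *
        (Real.exp (4 / (g:ℝ) * ξ x) - mconst g m₁ m₂) +
        2 * Real.cos (α x) * lfun m₁ m₂ (θ x))) x := fun x => (hA' x).cos
  have hcα' : Continuous (fun τ => Real.sin (α τ) * Real.sin (2 * θ τ) *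
      (Real.exp (4 / (g:ℝ) * ξ τ) - mconst g m₁ m₂) +
      2 * Real.cos (α τ) * lfun m₁ m₂ (θ τ)) :=
    ((hcs.mul hcS2).mul (hcE.sub continuous_const)).add ((continuous_const.mul hcc).mul hcl)
  have hcC' : Continuous (fun τ => -Real.sin (α τ) * (Real.sin (α τ) * Real.sin (2 * θ τ) *
      (Real.exp (4 / (g:ℝ) * ξ τ) - mconst g m₁ m₂) +
      2 * Real.cos (α τ) * lfun m₁ m₂ (θ τ))) := hcs.neg.mul hcα'
  -- the dominating integrand
  obtain ⟨dd, hdddef⟩ : ∃ dd : ℝ → ℝ, dd = fun τ =>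
      Real.sin (α τ)^2 * Real.sin (2*θ τ) * Real.exp (4/(g:ℝ) * ξ τ)
      + K * (Real.sin (α τ) * Real.sin (2 * θ τ)) := ⟨_, rfl⟩
  have hcdd : Continuous dd := by
    rw [hdddef]
    exact (((hcs.pow 2).mul hcS2).mul hcE).add (continuous_const.mul (hcs.mul hcS2))
  have hd0 : ∀ τ, t₀ ≤ τ → 0 ≤ dd τ := by
    intro τ hτ
    have h1 := hspos τ hτ
    have h2' := hS2pos τ
    have h3 := Real.exp_pos (4/(g:ℝ) * ξ τ)
    rw [hdddef]
    simp only
    have h4 : 0 ≤ K * (Real.sin (α τ) * Real.sin (2 * θ τ)) := by positivity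
    have h5 : 0 ≤ Real.sin (α τ)^2 * Real.sin (2*θ τ) * Real.exp (4/(g:ℝ) * ξ τ) :=
      mul_nonneg (mul_nonneg (sq_nonneg _) h2'.le) h3.le
    linarith
  -- pointwise domination
  have ee1 : ∀ τ, t₀ ≤ τ → mconst g m₁ m₂ * (Real.sin (α τ)^2 * Real.sin (2*θ τ))
      ≤ mconst g m₁ m₂ * (Real.sin (α τ) * Real.sin (2*θ τ)) := by
    intro τ hτ
    have hs1 : Real.sin (α τ) ≤ 1 := Real.sin_le_one _
    have hs0 := hspos τ hτ
    have hS := hS2pos τ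
    have h6 : Real.sin (α τ)^2 * Real.sin (2*θ τ) ≤ Real.sin (α τ) * Real.sin (2*θ τ) := by
      nlinarith [mul_nonneg (mul_nonneg hs0.le hS.le) (sub_nonneg.2 hs1)]
    nlinarith [h6, hm0]
  have ee3 : ∀ τ, t₀ ≤ τ → 2 * (m₁:ℝ) * Real.sin (α τ)
      ≤ 2 * (m₁:ℝ) / cb * (Real.sin (α τ) * Real.sin (2 * θ τ)) := by
    intro τ hτ
    have hs0 := hspos τ hτ
    have hSb := hS2b τ hτ
    rw [div_mul_eq_mul_div, le_div_iff₀ hcb]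
    nlinarith [mul_le_mul_of_nonneg_left hSb
      (by positivity : (0:ℝ) ≤ 2 * (m₁:ℝ) * Real.sin (α τ))]
  have hkey : ∀ τ, t₀ ≤ τ →
      mconst g m₁ m₂ * (Real.sin (α τ)^2 * Real.sin (2*θ τ))
        - 2 * Real.sin (α τ) * Real.cos (α τ) * lfun m₁ m₂ (θ τ)
      ≤ K * (Real.sin (α τ) * Real.sin (2 * θ τ)) := by
    intro τ hτ
    have hs0 := hspos τ hτ
    have hl0 : 0 ≤ lfun m₁ m₂ (θ τ) := lfun_nonneg hm₁ hm₂ (hD τ).1.le (hθlt τ hτ).le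
    have hl1 : lfun m₁ m₂ (θ τ) ≤ m₁ := lfun_le _
    have habs := abs_le.1 (Real.abs_cos_le_one (α τ))
    have h7 : 0 ≤ 2 * Real.sin (α τ) * lfun m₁ m₂ (θ τ) := by
      apply mul_nonneg _ hl0; linarith
    have h8 : 2 * Real.sin (α τ) * lfun m₁ m₂ (θ τ) * (-Real.cos (α τ))
        ≤ 2 * Real.sin (α τ) * lfun m₁ m₂ (θ τ) * 1 :=
      mul_le_mul_of_nonneg_left (by linarith [habs.1]) h7
    have h9 : (2 * Real.sin (α τ)) * lfun m₁ m₂ (θ τ) ≤ (2 * Real.sin (α τ)) * m₁ :=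
      mul_le_mul_of_nonneg_left hl1 (by linarith)
    have e2 : - (2 * Real.sin (α τ) * Real.cos (α τ) * lfun m₁ m₂ (θ τ))
        ≤ 2 * (m₁:ℝ) * Real.sin (α τ) := by linarith [h8, h9]
    rw [hKdef]
    linarith [ee1 τ hτ, e2, ee3 τ hτ]
  have habsb : ∀ τ, t₀ ≤ τ →
      |(-Real.sin (α τ) * (Real.sin (α τ) * Real.sin (2 * θ τ) *
        (Real.exp (4 / (g:ℝ) * ξ τ) - mconst g m₁ m₂) +
        2 * Real.cos (α τ) * lfun m₁ m₂ (θ τ)))| ≤ dd τ := by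
    intro τ hτ
    have hs1 : Real.sin (α τ) ≤ 1 := Real.sin_le_one _
    have hs0 := hspos τ hτ
    have hS := hS2pos τ
    have hE0 := Real.exp_pos (4/(g:ℝ) * ξ τ)
    have hl0 : 0 ≤ lfun m₁ m₂ (θ τ) := lfun_nonneg hm₁ hm₂ (hD τ).1.le (hθlt τ hτ).le
    have hl1 : lfun m₁ m₂ (θ τ) ≤ m₁ := lfun_le _
    have habs := abs_le.1 (Real.abs_cos_le_one (α τ))
    rw [abs_mul, abs_neg, abs_of_pos hs0]
    have t1 : |Real.sin (α τ) * Real.sin (2 * θ τ) *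
        (Real.exp (4 / (g:ℝ) * ξ τ) - mconst g m₁ m₂)|
        = Real.sin (α τ) * Real.sin (2 * θ τ) * |Real.exp (4 / (g:ℝ) * ξ τ) - mconst g m₁ m₂| := by
      rw [abs_mul, abs_of_nonneg (mul_nonneg hs0.le hS.le)]
    have t2 : |Real.exp (4 / (g:ℝ) * ξ τ) - mconst g m₁ m₂|
        ≤ Real.exp (4 / (g:ℝ) * ξ τ) + mconst g m₁ m₂ := by
      rw [abs_le]; constructor <;> linarith
    have t3 : |2 * Real.cos (α τ) * lfun m₁ m₂ (θ τ)| ≤ 2 * (m₁:ℝ) := by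
      rw [abs_mul, abs_mul, abs_two, abs_of_nonneg hl0]
      nlinarith [abs_nonneg (Real.cos (α τ)), habs.2, Real.abs_cos_le_one (α τ)]
    have t4 : Real.sin (α τ) * Real.sin (2 * θ τ) *
        |Real.exp (4 / (g:ℝ) * ξ τ) - mconst g m₁ m₂|
        ≤ Real.sin (α τ) * Real.sin (2 * θ τ) *
          (Real.exp (4 / (g:ℝ) * ξ τ) + mconst g m₁ m₂) :=
      mul_le_mul_of_nonneg_left t2 (mul_nonneg hs0.le hS.le)
    have hX : |Real.sin (α τ) * Real.sin (2 * θ τ) *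
        (Real.exp (4 / (g:ℝ) * ξ τ) - mconst g m₁ m₂) +
        2 * Real.cos (α τ) * lfun m₁ m₂ (θ τ)|
        ≤ Real.sin (α τ) * Real.sin (2 * θ τ) * Real.exp (4 / (g:ℝ) * ξ τ)
          + mconst g m₁ m₂ * (Real.sin (α τ) * Real.sin (2 * θ τ)) + 2 * (m₁:ℝ) := by
      refine le_trans (abs_add_le _ _) ?_
      rw [t1]
      nlinarith [t3, t4]
    have h12 := mul_le_mul_of_nonneg_left hX hs0.le
    have h13 : Real.sin (α τ) * (Real.sin (α τ) * Real.sin (2 * θ τ) *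
          Real.exp (4 / (g:ℝ) * ξ τ)
          + mconst g m₁ m₂ * (Real.sin (α τ) * Real.sin (2 * θ τ)) + 2 * (m₁:ℝ))
        = Real.sin (α τ)^2 * Real.sin (2*θ τ) * Real.exp (4/(g:ℝ) * ξ τ)
          + mconst g m₁ m₂ * (Real.sin (α τ)^2 * Real.sin (2*θ τ))
          + 2 * (m₁:ℝ) * Real.sin (α τ) := by ring
    rw [h13] at h12
    rw [hdddef]
    simp only
    rw [hKdef]
    linarith [h12, ee1 τ hτ, ee3 τ hτ]
  -- FTC identities
  have hFTCθ : ∀ a b : ℝ, ∫ τ in a..b, Real.sin (α τ) * Real.sin (2*θ τ) = θ b - θ a := by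
    intro a b
    exact intervalIntegral.integral_eq_sub_of_hasDerivAt (fun x _ => hθd x)
      ((hcs.mul hcS2).intervalIntegrable a b)
  have hFTCc : ∀ a b : ℝ, (∫ τ in a..b, (-Real.sin (α τ) * (Real.sin (α τ) * Real.sin (2 * θ τ) *
      (Real.exp (4 / (g:ℝ) * ξ τ) - mconst g m₁ m₂) +
      2 * Real.cos (α τ) * lfun m₁ m₂ (θ τ))))
      = Real.cos (α b) - Real.cos (α a) := by
    intro a b
    exact intervalIntegral.integral_eq_sub_of_hasDerivAt (fun x _ => hCd x)
      (hcC'.intervalIntegrable a b)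
  -- main integral bound
  have hsum : ∀ a b : ℝ, t₀ ≤ a → a ≤ b →
      (∫ τ in a..b, dd τ) ≤ 2 + 2*K*(θ b - θ a) := by
    intro a b ha hab
    have hcr : Continuous (fun τ => mconst g m₁ m₂ * (Real.sin (α τ)^2 * Real.sin (2*θ τ))
        - 2 * Real.sin (α τ) * Real.cos (α τ) * lfun m₁ m₂ (θ τ)
        + K * (Real.sin (α τ) * Real.sin (2 * θ τ)) + Real.sin (α τ)^2 * Real.sin (2*θ τ)
          * Real.exp (4/(g:ℝ) * ξ τ) - Real.sin (α τ)^2 * Real.sin (2*θ τ)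
          * Real.exp (4/(g:ℝ) * ξ τ)) := by
      exact ((((continuous_const.mul ((hcs.pow 2).mul hcS2)).sub
        (((continuous_const.mul hcs).mul hcc).mul hcl)).add
        (continuous_const.mul (hcs.mul hcS2))).add
        (((hcs.pow 2).mul hcS2).mul hcE)).sub (((hcs.pow 2).mul hcS2).mul hcE)
    have hcr' : Continuous (fun τ => mconst g m₁ m₂ * (Real.sin (α τ)^2 * Real.sin (2*θ τ))
        - 2 * Real.sin (α τ) * Real.cos (α τ) * lfun m₁ m₂ (θ τ)
        + K * (Real.sin (α τ) * Real.sin (2 * θ τ))) := by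
      have : (fun τ => mconst g m₁ m₂ * (Real.sin (α τ)^2 * Real.sin (2*θ τ))
        - 2 * Real.sin (α τ) * Real.cos (α τ) * lfun m₁ m₂ (θ τ)
        + K * (Real.sin (α τ) * Real.sin (2 * θ τ)))
        = (fun τ => mconst g m₁ m₂ * (Real.sin (α τ)^2 * Real.sin (2*θ τ))
        - 2 * Real.sin (α τ) * Real.cos (α τ) * lfun m₁ m₂ (θ τ)
        + K * (Real.sin (α τ) * Real.sin (2 * θ τ)) + Real.sin (α τ)^2 * Real.sin (2*θ τ)
          * Real.exp (4/(g:ℝ) * ξ τ) - Real.sin (α τ)^2 * Real.sin (2*θ τ)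
          * Real.exp (4/(g:ℝ) * ξ τ)) := by
        funext τ; ring
      rw [this]; exact hcr
    have hsplit : ∀ τ : ℝ, dd τ =
        (-(-Real.sin (α τ) * (Real.sin (α τ) * Real.sin (2 * θ τ) *
          (Real.exp (4 / (g:ℝ) * ξ τ) - mconst g m₁ m₂) +
          2 * Real.cos (α τ) * lfun m₁ m₂ (θ τ))))
        + (mconst g m₁ m₂ * (Real.sin (α τ)^2 * Real.sin (2*θ τ))
            - 2 * Real.sin (α τ) * Real.cos (α τ) * lfun m₁ m₂ (θ τ)
            + K * (Real.sin (α τ) * Real.sin (2 * θ τ))) := by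
      intro τ; rw [hdddef]; ring
    have heq : (∫ τ in a..b, dd τ) =
        (Real.cos (α a) - Real.cos (α b)) + ∫ τ in a..b,
          (mconst g m₁ m₂ * (Real.sin (α τ)^2 * Real.sin (2*θ τ))
            - 2 * Real.sin (α τ) * Real.cos (α τ) * lfun m₁ m₂ (θ τ)
            + K * (Real.sin (α τ) * Real.sin (2 * θ τ))) := by
      have h14 : (∫ τ in a..b, dd τ) = ∫ τ in a..b,
          ((-(-Real.sin (α τ) * (Real.sin (α τ) * Real.sin (2 * θ τ) *
            (Real.exp (4 / (g:ℝ) * ξ τ) - mconst g m₁ m₂) +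
            2 * Real.cos (α τ) * lfun m₁ m₂ (θ τ))))
          + (mconst g m₁ m₂ * (Real.sin (α τ)^2 * Real.sin (2*θ τ))
              - 2 * Real.sin (α τ) * Real.cos (α τ) * lfun m₁ m₂ (θ τ)
              + K * (Real.sin (α τ) * Real.sin (2 * θ τ)))) :=
        intervalIntegral.integral_congr (fun τ _ => hsplit τ)
      rw [h14, intervalIntegral.integral_add (show
          IntervalIntegrable (fun τ => -(-Real.sin (α τ) * (Real.sin (α τ) * Real.sin (2 * θ τ) *
            (Real.exp (4 / (g:ℝ) * ξ τ) - mconst g m₁ m₂) +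
            2 * Real.cos (α τ) * lfun m₁ m₂ (θ τ)))) MeasureTheory.volume a b from
          hcC'.neg.intervalIntegrable a b)
        (hcr'.intervalIntegrable a b), intervalIntegral.integral_neg, hFTCc a b]
      ring
    have hb2 : (∫ τ in a..b, (mconst g m₁ m₂ * (Real.sin (α τ)^2 * Real.sin (2*θ τ))
        - 2 * Real.sin (α τ) * Real.cos (α τ) * lfun m₁ m₂ (θ τ)
        + K * (Real.sin (α τ) * Real.sin (2 * θ τ))))
        ≤ ∫ τ in a..b, (2*K) * (Real.sin (α τ) * Real.sin (2 * θ τ)) := by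
      apply intervalIntegral.integral_mono_on hab (hcr'.intervalIntegrable a b)
        ((continuous_const.mul (hcs.mul hcS2)).intervalIntegrable a b)
      intro τ hτ
      have := hkey τ (le_trans ha hτ.1)
      simp only [Pi.mul_apply]
      linarith
    have hb3 : (∫ τ in a..b, (2*K) * (Real.sin (α τ) * Real.sin (2 * θ τ)))
        = 2*K*(θ b - θ a) := by
      rw [intervalIntegral.integral_const_mul, hFTCθ a b]
    have hcosb := Real.neg_one_le_cos (α b)
    have hcosa := Real.cos_le_one (α a)
    rw [heq]
    rw [hb3] at hb2
    linarith
  -- cumulative dominating integral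
  obtain ⟨Dm, hDmdef⟩ : ∃ Dm : ℝ → ℝ, Dm = fun t => ∫ τ in t₀..(max t t₀), dd τ := ⟨_, rfl⟩
  have hDmax_eq : ∀ t₂ t₃ : ℝ, t₂ ≤ t₃ →
      Dm t₃ = Dm t₂ + ∫ τ in (max t₂ t₀)..(max t₃ t₀), dd τ := by
    intro t₂ t₃ h
    rw [hDmdef]; simp only
    rw [intervalIntegral.integral_add_adjacent_intervals
      (hcdd.intervalIntegrable t₀ (max t₂ t₀)) (hcdd.intervalIntegrable (max t₂ t₀) (max t₃ t₀))]
  have hDmono : Monotone Dm := by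
    intro t₂ t₃ h
    rw [hDmax_eq t₂ t₃ h]
    have hmm' : max t₂ t₀ ≤ max t₃ t₀ := max_le_max h le_rfl
    have h21 : 0 ≤ ∫ τ in (max t₂ t₀)..(max t₃ t₀), dd τ :=
      intervalIntegral.integral_nonneg hmm' (fun u hu => hd0 u (le_trans (le_max_right t₂ t₀) hu.1))
    linarith
  have hDub : ∀ t, Dm t ≤ 2 + 2*K*(π/2) := by
    intro t
    rw [hDmdef]; simp only
    have h15 := hsum t₀ (max t t₀) le_rfl (le_max_right t t₀)
    have h16 : θ (max t t₀) - θ t₀ ≤ π/2 := by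
      have h16a := hθlt (max t t₀) (le_max_right t t₀)
      have h16b := (hD t₀).1
      linarith [hts.2]
    nlinarith [hKpos]
  have hDlim := tendsto_atTop_ciSup hDmono
    ⟨2 + 2*K*(π/2), fun x hx => by obtain ⟨t, rfl⟩ := hx; exact hDub t⟩
  -- Cauchy-type bound for cos α
  have hCdiffb : ∀ t₂ t₃ : ℝ, t₂ ≤ t₃ →
      |Real.cos (α (max t₃ t₀)) - Real.cos (α (max t₂ t₀))| ≤ Dm t₃ - Dm t₂ := by
    intro t₂ t₃ h
    have ha : t₀ ≤ max t₂ t₀ := le_max_right _ _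
    have hab : max t₂ t₀ ≤ max t₃ t₀ := max_le_max h le_rfl
    rw [← hFTCc (max t₂ t₀) (max t₃ t₀)]
    refine le_trans (intervalIntegral.abs_integral_le_integral_abs hab) ?_
    have h22 := intervalIntegral.integral_mono_on (μ := MeasureTheory.volume) hab
      (hcC'.abs.intervalIntegrable (max t₂ t₀) (max t₃ t₀))
      (hcdd.intervalIntegrable (max t₂ t₀) (max t₃ t₀))
      (fun τ hτ => habsb τ (le_trans ha hτ.1))
    have h17 : Dm t₃ - Dm t₂ = ∫ τ in (max t₂ t₀)..(max t₃ t₀), dd τ := by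
      rw [hDmax_eq t₂ t₃ h]; ring
    rw [h17]
    exact h22
  obtain ⟨G, hGdef⟩ : ∃ G : ℝ → ℝ, G = fun t => Real.cos (α (max t t₀)) + Dm t := ⟨_, rfl⟩
  have hGmono : Monotone G := by
    intro t₂ t₃ h
    rw [hGdef]; simp only
    have := (abs_le.1 (hCdiffb t₂ t₃ h)).1
    linarith
  have hGub : ∀ t, G t ≤ 1 + (2 + 2*K*(π/2)) := by
    intro t; rw [hGdef]; simp only
    linarith [Real.cos_le_one (α (max t t₀)), hDub t]
  have hGlim := tendsto_atTop_ciSup hGmono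
    ⟨1 + (2 + 2*K*(π/2)), fun x hx => by obtain ⟨t, rfl⟩ := hx; exact hGub t⟩
  obtain ⟨Cinf, hClim⟩ : ∃ Cinf, Filter.Tendsto (fun t => Real.cos (α (max t t₀)))
      Filter.atTop (nhds Cinf) := by
    refine ⟨(⨆ t, G t) - (⨆ t, Dm t), ?_⟩
    refine (hGlim.sub hDlim).congr (fun t => ?_)
    rw [hGdef]; simp only; ring
  have hCinf_le : Cinf ≤ 1 :=
    le_of_tendsto hClim (Filter.Eventually.of_forall (fun t => Real.cos_le_one _))
  have hCinf_ge : -1 ≤ Cinf :=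
    ge_of_tendsto hClim (Filter.Eventually.of_forall (fun t => Real.neg_one_le_cos _))
  have hsin_eq : ∀ t : ℝ, Real.sin (α (max t t₀)) = Real.sqrt (1 - Real.cos (α (max t t₀))^2) := by
    intro t
    have hp := hspos (max t t₀) (le_max_right t t₀)
    have h23 : 1 - Real.cos (α (max t t₀))^2 = Real.sin (α (max t t₀))^2 := by
      nlinarith [Real.sin_sq_add_cos_sq (α (max t t₀))]
    rw [h23, Real.sqrt_sq hp.le]
  have hslim : Filter.Tendsto (fun t => Real.sin (α (max t t₀))) Filter.atTop
      (nhds (Real.sqrt (1 - Cinf^2))) := by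
    have hcont : Continuous (fun y : ℝ => Real.sqrt (1 - y^2)) :=
      (continuous_const.sub (continuous_pow 2)).sqrt
    exact ((hcont.tendsto Cinf).comp hClim).congr (fun t => (hsin_eq t).symm)
  -- generic linear growth lemma
  have hlin : ∀ (r T0 : ℝ) (f df : ℝ → ℝ), (∀ x, HasDerivAt f (df x) x) →
      (∀ x, T0 ≤ x → r ≤ df x) → ∀ t, T0 ≤ t → f T0 + r*(t - T0) ≤ f t := by
    intro r T0 f df hdf hr t ht
    have hfd : ∀ x : ℝ, HasDerivAt (fun y => f y - r*y) (df x - r) x := by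
      intro x
      have h24 : HasDerivAt (fun y : ℝ => r * y) r x := by
        simpa using (hasDerivAt_id x).const_mul r
      exact (hdf x).sub h24
    have hfc : Differentiable ℝ f := fun x => (hdf x).differentiableAt
    have hmono : MonotoneOn (fun y => f y - r*y) (Set.Ici T0) := by
      apply monotoneOn_of_deriv_nonneg (convex_Ici T0)
      · exact (hfc.continuous.sub (continuous_const.mul continuous_id)).continuousOn
      · exact fun x _ => (hfd x).differentiableAt.differentiableWithinAt
      · intro x hx
        rw [interior_Ici] at hx
        rw [(hfd x).deriv]
        linarith [hr x hx.le]
    have := hmono (Set.self_mem_Ici) (Set.mem_Ici.2 ht) ht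
    simp only at this
    linarith
  -- case analysis on the limit of sin α
  rcases lt_or_eq_of_le (Real.sqrt_nonneg (1 - Cinf^2)) with hsgt | hszero
  · -- sin α has a positive limit : θ grows linearly, contradiction
    obtain ⟨t₄, ht₄⟩ := Filter.eventually_atTop.1
      (hslim.eventually (eventually_gt_nhds (half_lt_self hsgt)))
    have hρpos : 0 < Real.sqrt (1 - Cinf^2)/2 * cb := by
      have := hsgt
      positivity
    have hstep : ∀ x, max t₄ t₀ ≤ x →
        Real.sqrt (1 - Cinf^2)/2 * cb ≤ Real.sin (α x) * Real.sin (2 * θ x) := by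
      intro x hx
      have hx0 : t₀ ≤ x := le_trans (le_max_right t₄ t₀) hx
      have h18 := ht₄ x (le_trans (le_max_left t₄ t₀) hx)
      rw [max_eq_left hx0] at h18
      have h25 := hS2b x hx0
      exact mul_le_mul h18.le h25 hcb.le (hspos x hx0).le
    have hgrow := hlin _ (max t₄ t₀) θ _ hθd hstep
    obtain ⟨ρ, hρdef⟩ : ∃ ρ : ℝ, ρ = Real.sqrt (1 - Cinf^2)/2 * cb := ⟨_, rfl⟩
    have hρpos' : 0 < ρ := hρdef ▸ hρpos
    have hbig := hgrow (max t₄ t₀ + π/ρ)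
      (le_add_of_nonneg_right (div_nonneg hpi.le hρpos'.le))
    rw [show max t₄ t₀ + π/ρ - max t₄ t₀ = π/ρ by ring] at hbig
    rw [← hρdef] at hbig
    rw [mul_div_cancel₀ _ hρpos'.ne'] at hbig
    have hθb := hθlt (max t₄ t₀ + π/ρ) (le_trans (le_max_right t₄ t₀)
      (le_add_of_nonneg_right (by positivity)))
    have hθa := (hD (max t₄ t₀)).1
    linarith [hts.2]
  · -- sin α tends to 0, so cos α tends to ±1
    have hle0 : 1 - Cinf^2 ≤ 0 := Real.sqrt_eq_zero'.1 hszero.symm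
    have hprod : (1 - Cinf)*(1 + Cinf) = 0 := by
      have hp1 : 0 ≤ (1 - Cinf)*(1 + Cinf) := mul_nonneg (by linarith) (by linarith)
      nlinarith
    have hslim0 : Filter.Tendsto (fun t => Real.sin (α (max t t₀))) Filter.atTop (nhds 0) := by
      rw [← hszero] at hslim; exact hslim
    have hξd : ∀ x, HasDerivAt ξ (Real.cos (α x) * Real.sin (2*θ x)) x := fun x => (hsol x).1
    -- final contradiction helper : sin (α ·) eventually monotone but tends to 0
    have hfinal : ∀ t₆ : ℝ, t₀ ≤ t₆ → MonotoneOn (fun x => Real.sin (α x)) (Set.Ici t₆) → False := by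
      intro t₆ ht₆0 hsmono
      obtain ⟨t₇, ht₇⟩ := Filter.eventually_atTop.1
        (hslim0.eventually (eventually_lt_nhds (hspos t₆ ht₆0)))
      have h26 := ht₇ (max t₇ t₆) (le_max_left _ _)
      rw [max_eq_left (le_trans ht₆0 (le_max_right t₇ t₆))] at h26
      have h27 := hsmono (Set.mem_Ici.2 (le_refl t₆)) (Set.mem_Ici.2 (le_max_right t₇ t₆))
        (le_max_right t₇ t₆)
      simp only at h27
      linarith
    rcases mul_eq_zero.1 hprod with hCpos | hCneg
    · -- Cinf = 1
      have hC1 : Cinf = 1 := by linarith [sub_eq_zero.1 hCpos]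
      obtain ⟨t₄, ht₄⟩ := Filter.eventually_atTop.1
        (hClim.eventually (eventually_gt_nhds (by rw [hC1]; norm_num : (1:ℝ)/2 < Cinf)))
      have hcge : ∀ x, max t₄ t₀ ≤ x → 1/2 ≤ Real.cos (α x) := by
        intro x hx
        have h28 := ht₄ x (le_trans (le_max_left t₄ t₀) hx)
        rw [max_eq_left (le_trans (le_max_right t₄ t₀) hx)] at h28
        linarith
      have hstep : ∀ x, max t₄ t₀ ≤ x → cb/2 ≤ Real.cos (α x) * Real.sin (2*θ x) := by
        intro x hx
        have hx0 : t₀ ≤ x := le_trans (le_max_right t₄ t₀) hx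
        have h29 := hcge x hx
        have h30 := hS2b x hx0
        calc cb/2 = (1/2)*cb := by ring
        _ ≤ Real.cos (α x) * Real.sin (2*θ x) :=
          mul_le_mul h29 h30 hcb.le (by linarith)
      have hξgrow := hlin (cb/2) (max t₄ t₀) ξ _ hξd hstep
      obtain ⟨t₆, ht₆def⟩ : ∃ t₆ : ℝ, t₆ = max t₄ t₀ +
          max 0 (((g:ℝ)/4*Real.log (mconst g m₁ m₂ + 1) - ξ (max t₄ t₀)) / (cb/2)) := ⟨_, rfl⟩
      have ht₆ge : max t₄ t₀ ≤ t₆ := by rw [ht₆def]; exact le_add_of_nonneg_right (le_max_left _ _)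
      have ht₆0 : t₀ ≤ t₆ := le_trans (le_max_right t₄ t₀) ht₆ge
      have hEbig : ∀ x, t₆ ≤ x → mconst g m₁ m₂ + 1 ≤ Real.exp (4/(g:ℝ) * ξ x) := by
        intro x hx
        have hx5 : max t₄ t₀ ≤ x := le_trans ht₆ge hx
        have h31 := hξgrow x hx5
        have h32 : (g:ℝ)/4*Real.log (mconst g m₁ m₂ + 1) ≤ ξ x := by
          have h33 : max 0 (((g:ℝ)/4*Real.log (mconst g m₁ m₂ + 1) - ξ (max t₄ t₀)) / (cb/2))
              ≤ x - max t₄ t₀ := by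
            rw [ht₆def] at hx; linarith
          have h34 : ((g:ℝ)/4*Real.log (mconst g m₁ m₂ + 1) - ξ (max t₄ t₀)) / (cb/2)
              ≤ x - max t₄ t₀ := le_trans (le_max_right _ _) h33
          have h35 := mul_le_mul_of_nonneg_left h34 (by positivity : (0:ℝ) ≤ cb/2)
          rw [mul_div_cancel₀ _ (by positivity : (cb/2 : ℝ) ≠ 0)] at h35
          linarith
        have h36 : Real.log (mconst g m₁ m₂ + 1) ≤ 4/(g:ℝ) * ξ x := by
          have h37 := mul_le_mul_of_nonneg_left h32 (by positivity : (0:ℝ) ≤ 4/(g:ℝ))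
          have hgne : (g:ℝ) ≠ 0 := hgR.ne'
          have h38 : 4/(g:ℝ) * ((g:ℝ)/4*Real.log (mconst g m₁ m₂ + 1))
              = Real.log (mconst g m₁ m₂ + 1) := by
            field_simp
          linarith
        calc mconst g m₁ m₂ + 1 = Real.exp (Real.log (mconst g m₁ m₂ + 1)) :=
          (Real.exp_log (by linarith)).symm
        _ ≤ Real.exp (4/(g:ℝ) * ξ x) := Real.exp_le_exp.2 h36
      have hsmono : MonotoneOn (fun x => Real.sin (α x)) (Set.Ici t₆) := by
        apply monotoneOn_of_deriv_nonneg (convex_Ici t₆) hcs.continuousOn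
          (fun x _ => ((hA' x).sin).differentiableAt.differentiableWithinAt)
        intro x hx
        rw [interior_Ici] at hx
        rw [((hA' x).sin).deriv]
        have hx0 : t₀ ≤ x := le_trans ht₆0 hx.le
        have h39 := hcge x (le_trans ht₆ge hx.le)
        have h40 := hEbig x hx.le
        have hl0 : 0 ≤ lfun m₁ m₂ (θ x) := lfun_nonneg hm₁ hm₂ (hD x).1.le (hθlt x hx0).le
        apply mul_nonneg (by linarith)
        apply add_nonneg
        · apply mul_nonneg (mul_nonneg (hspos x hx0).le (hS2pos x).le)
          linarith
        · apply mul_nonneg (by linarith)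
          exact hl0
      exact hfinal t₆ ht₆0 hsmono
    · -- Cinf = -1
      have hC1 : Cinf = -1 := by linarith [add_eq_zero_iff_eq_neg.1 hCneg]
      obtain ⟨t₄, ht₄⟩ := Filter.eventually_atTop.1
        (hClim.eventually (eventually_lt_nhds (by rw [hC1]; norm_num : Cinf < -(1/2))))
      have hcge : ∀ x, max t₄ t₀ ≤ x → Real.cos (α x) ≤ -(1/2) := by
        intro x hx
        have h28 := ht₄ x (le_trans (le_max_left t₄ t₀) hx)
        rw [max_eq_left (le_trans (le_max_right t₄ t₀) hx)] at h28
        linarith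
      have hstep : ∀ x, max t₄ t₀ ≤ x → cb/2 ≤ -(Real.cos (α x) * Real.sin (2*θ x)) := by
        intro x hx
        have hx0 : t₀ ≤ x := le_trans (le_max_right t₄ t₀) hx
        have h29 := hcge x hx
        have h30 := hS2b x hx0
        have h41 : Real.cos (α x) * Real.sin (2*θ x) ≤ Real.cos (α x) * cb := by
          apply mul_le_mul_of_nonpos_left h30 (by linarith)
        have h42 : Real.cos (α x) * cb ≤ -(1/2) * cb :=
          mul_le_mul_of_nonneg_right h29 hcb.le
        linarith
      have hξdn : ∀ x, HasDerivAt (fun y => -ξ y) (-(Real.cos (α x) * Real.sin (2*θ x))) x :=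
        fun x => (hξd x).neg
      have hξgrow := hlin (cb/2) (max t₄ t₀) (fun y => -ξ y) _ hξdn hstep
      obtain ⟨t₆, ht₆def⟩ : ∃ t₆ : ℝ, t₆ = max t₄ t₀ +
          max 0 ((ξ (max t₄ t₀) - (g:ℝ)/4*Real.log (mconst g m₁ m₂ - 1)) / (cb/2)) := ⟨_, rfl⟩
      have ht₆ge : max t₄ t₀ ≤ t₆ := by rw [ht₆def]; exact le_add_of_nonneg_right (le_max_left _ _)
      have ht₆0 : t₀ ≤ t₆ := le_trans (le_max_right t₄ t₀) ht₆ge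
      have hEsmall : ∀ x, t₆ ≤ x → Real.exp (4/(g:ℝ) * ξ x) ≤ mconst g m₁ m₂ - 1 := by
        intro x hx
        have hx5 : max t₄ t₀ ≤ x := le_trans ht₆ge hx
        have h31 := hξgrow x hx5
        have h32 : ξ x ≤ (g:ℝ)/4*Real.log (mconst g m₁ m₂ - 1) := by
          have h33 : max 0 ((ξ (max t₄ t₀) - (g:ℝ)/4*Real.log (mconst g m₁ m₂ - 1)) / (cb/2))
              ≤ x - max t₄ t₀ := by
            rw [ht₆def] at hx; linarith
          have h34 : (ξ (max t₄ t₀) - (g:ℝ)/4*Real.log (mconst g m₁ m₂ - 1)) / (cb/2)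
              ≤ x - max t₄ t₀ := le_trans (le_max_right _ _) h33
          have h35 := mul_le_mul_of_nonneg_left h34 (by positivity : (0:ℝ) ≤ cb/2)
          rw [mul_div_cancel₀ _ (by positivity : (cb/2 : ℝ) ≠ 0)] at h35
          linarith
        have h36 : 4/(g:ℝ) * ξ x ≤ Real.log (mconst g m₁ m₂ - 1) := by
          have h37 := mul_le_mul_of_nonneg_left h32 (by positivity : (0:ℝ) ≤ 4/(g:ℝ))
          have hgne : (g:ℝ) ≠ 0 := hgR.ne'
          have h38 : 4/(g:ℝ) * ((g:ℝ)/4*Real.log (mconst g m₁ m₂ - 1))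
              = Real.log (mconst g m₁ m₂ - 1) := by
            field_simp
          linarith
        calc Real.exp (4/(g:ℝ) * ξ x) ≤ Real.exp (Real.log (mconst g m₁ m₂ - 1)) :=
          Real.exp_le_exp.2 h36
        _ = mconst g m₁ m₂ - 1 := Real.exp_log (by linarith)
      have hsmono : MonotoneOn (fun x => Real.sin (α x)) (Set.Ici t₆) := by
        apply monotoneOn_of_deriv_nonneg (convex_Ici t₆) hcs.continuousOn
          (fun x _ => ((hA' x).sin).differentiableAt.differentiableWithinAt)
        intro x hx
        rw [interior_Ici] at hx
        rw [((hA' x).sin).deriv]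
        have hx0 : t₀ ≤ x := le_trans ht₆0 hx.le
        have h39 := hcge x (le_trans ht₆ge hx.le)
        have h40 := hEsmall x hx.le
        have hl0 : 0 ≤ lfun m₁ m₂ (θ x) := lfun_nonneg hm₁ hm₂ (hD x).1.le (hθlt x hx0).le
        have hbr : Real.sin (α x) * Real.sin (2 * θ x) *
            (Real.exp (4/(g:ℝ) * ξ x) - mconst g m₁ m₂) +
            2 * Real.cos (α x) * lfun m₁ m₂ (θ x) ≤ 0 → 0 ≤ Real.cos (α x) *
            (Real.sin (α x) * Real.sin (2 * θ x) *
            (Real.exp (4/(g:ℝ) * ξ x) - mconst g m₁ m₂) +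
            2 * Real.cos (α x) * lfun m₁ m₂ (θ x)) := by
          intro hbr0
          have := mul_nonneg (neg_nonneg.2 (by linarith : Real.cos (α x) ≤ 0))
            (neg_nonneg.2 hbr0)
          rwa [neg_mul_neg] at this
        apply hbr
        have h43 : Real.sin (α x) * Real.sin (2 * θ x) *
            (Real.exp (4/(g:ℝ) * ξ x) - mconst g m₁ m₂) ≤ 0 := by
          apply mul_nonpos_of_nonneg_of_nonpos
          · exact mul_nonneg (hspos x hx0).le (hS2pos x).le
          · linarith
        have h44 : 2 * Real.cos (α x) * lfun m₁ m₂ (θ x) ≤ 0 := by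
          apply mul_nonpos_of_nonpos_of_nonneg _ hl0
          linarith
        linarith
      exact hfinal t₆ ht₆0 hsmono

lemma thetaStar_swap {m₁ m₂ : ℕ} (hm₁ : 0 < m₁) (hm₂ : 0 < m₂) :
    thetaStar m₂ m₁ = π/2 - thetaStar m₁ m₂ := by
  unfold thetaStar
  have h1 : ((m₂:ℝ)/(m₁:ℝ)) = ((m₁:ℝ)/(m₂:ℝ))⁻¹ := by rw [inv_div]
  rw [h1, Real.sqrt_inv]
  exact Real.arctan_inv_of_pos (Real.sqrt_pos.2 (by positivity))

lemma mconst_swap (g m₁ m₂ : ℕ) : mconst g m₂ m₁ = mconst g m₁ m₂ := by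
  unfold mconst; ring

lemma lfun_swap (m₁ m₂ : ℕ) (x : ℝ) : lfun m₂ m₁ (π/2 - x) = - lfun m₁ m₂ x := by
  unfold lfun
  rw [Real.cos_pi_div_two_sub, Real.sin_pi_div_two_sub]
  ring


/-- If `θ'` points towards the line `θ = θ*`, then the solution reaches this
line in finite time. -/
theorem stmt8 (g m₁ m₂ : ℕ) (hg : g = 1 ∨ g = 2 ∨ g = 3 ∨ g = 4 ∨ g = 6)
    (hm₁ : 0 < m₁) (hm₂ : 0 < m₂)
    (ξ θ α : ℝ → ℝ) (hsol : IsSolution g m₁ m₂ ξ θ α)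
    (hD : ∀ t : ℝ, θ t ∈ Set.Ioo 0 (Real.pi / 2)) (t₀ : ℝ)
    (h : (θ t₀ < thetaStar m₁ m₂ ∧
            Real.sin (α t₀) * Real.sin (2 * θ t₀) > 0) ∨
         (θ t₀ > thetaStar m₁ m₂ ∧
            Real.sin (α t₀) * Real.sin (2 * θ t₀) < 0)) :
    ∃ T > (0 : ℝ), θ (t₀ + T) = thetaStar m₁ m₂ := by
  have hg0 : 0 < g := by rcases hg with h'|h'|h'|h'|h' <;> subst h' <;> norm_num
  rcases h with ⟨ha, hb⟩ | ⟨ha, hb⟩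
  · exact case1 g m₁ m₂ hg0 hm₁ hm₂ ξ θ α hsol hD t₀ ha hb
  · have hsol' : IsSolution g m₂ m₁ ξ (fun t => π/2 - θ t) (fun t => -α t) := by
      intro t
      obtain ⟨hξ', hθ', hα'⟩ := hsol t
      refine ⟨?_, ?_, ?_⟩
      · convert hξ' using 1
        simp only
        rw [Real.cos_neg, show 2*(π/2 - θ t) = π - 2*θ t by ring, Real.sin_pi_sub]
      · convert hθ'.const_sub (π/2) using 1
        · rfl
        · rfl
        rw [Real.sin_neg, show 2*(π/2 - θ t) = π - 2*θ t by ring, Real.sin_pi_sub]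
        ring
      · convert hα'.neg using 1
        · rfl
        · rfl
        · rfl
        rw [Real.sin_neg, Real.cos_neg, show 2*(π/2 - θ t) = π - 2*θ t by ring,
          Real.sin_pi_sub, lfun_swap m₁ m₂ (θ t), mconst_swap g m₁ m₂]
        ring
    have hD' : ∀ t : ℝ, (π/2 - θ t) ∈ Set.Ioo 0 (π/2) := fun t =>
      ⟨by linarith [(hD t).2], by linarith [(hD t).1]⟩
    have hth : (π/2 - θ t₀) < thetaStar m₂ m₁ := by
      rw [thetaStar_swap hm₁ hm₂]; linarith
    have hss : 0 < Real.sin (-α t₀) * Real.sin (2*(π/2 - θ t₀)) := by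
      rw [Real.sin_neg, show 2*(π/2 - θ t₀) = π - 2*θ t₀ by ring, Real.sin_pi_sub]
      nlinarith [hb]
    obtain ⟨T, hT, hTeq⟩ := case1 g m₂ m₁ hg0 hm₂ hm₁ ξ (fun t => π/2 - θ t)
      (fun t => -α t) hsol' hD' t₀ hth hss
    refine ⟨T, hT, ?_⟩
    rw [thetaStar_swap hm₁ hm₂] at hTeq
    linarith
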